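/- For all integers k ≥ 2 and n ≥ 2k, there exists an edge-colored graph G on n vertices with e(G) + c(G) = C(n,2) + 1 + max{ C(2k−2,2) − C(n−2k+2,2), C(k−2,2) + (k−2)(n−k+2), C(2k−3,2) } (where the subtraction is taken in the integers) that contains no rainbow matching of size k. In particular, the threshold C(n,2) + 2 + max{ C(2k−2,2) − C(n−2k+2,2), C(k−2,2) + (k−2)(n−k+2), C(2k−3,2) } on e(G)+c(G) for forcing a rainbow matching of size k is best possible. -/

import Mathlib

open Set Function


/-- `G` (with edge-coloring `c`) contains a rainbow matching of size `k`:
`k` pairwise vertex-disjoint edges of `G` with pairwise distinct colors. -/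
def HasRainbowMatching {V α : Type*} (G : SimpleGraph V) (c : Sym2 V → α) (k : ℕ) : Prop :=
  ∃ M : Finset (Sym2 V), M.card = k ∧ ↑M ⊆ G.edgeSet ∧
    (∀ e ∈ M, ∀ f ∈ M, e ≠ f → ∀ v : V, v ∈ e → v ∉ f) ∧
    Set.InjOn c ↑M

namespace RMAux
variable {n : ℕ}

/-- Edges (non-diagonal `Sym2` elements) with all endpoints in `T`. -/
def inside (n : ℕ) (T : Finset (Fin n)) : Set (Sym2 (Fin n)) :=
  {s | ¬ s.IsDiag ∧ ∀ v ∈ s, v ∈ T}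

/-- Edges with at least one endpoint in `S`. -/
def meet (n : ℕ) (S : Finset (Fin n)) : Set (Sym2 (Fin n)) :=
  {s | ¬ s.IsDiag ∧ ∃ v ∈ s, v ∈ S}

lemma ncard_notDiag (α : Type*) [Fintype α] [DecidableEq α] :
    ({s : Sym2 α | ¬ s.IsDiag}).ncard = (Fintype.card α).choose 2 := by
  rw [Set.ncard_eq_toFinset_card', Set.toFinset_card, ← Sym2.card_subtype_not_diag]
  rfl

lemma inside_eq_image (T : Finset (Fin n)) :
    inside n T = Sym2.map (Subtype.val : T → Fin n) '' {s | ¬ s.IsDiag} := by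
  ext s
  constructor
  · rintro ⟨hd, hmem⟩
    induction s using Sym2.ind with
    | _ x y =>
      refine ⟨s(⟨x, hmem x (by simp)⟩, ⟨y, hmem y (by simp)⟩), ?_, by simp⟩
      simp only [Set.mem_setOf_eq, Sym2.mk_isDiag_iff] at hd ⊢
      exact fun h => hd (congrArg Subtype.val h)
  · rintro ⟨t, ht, rfl⟩
    refine ⟨by rwa [Sym2.isDiag_map Subtype.val_injective], ?_⟩
    intro v hv
    rw [Sym2.mem_map] at hv
    obtain ⟨a, _, rfl⟩ := hv
    exact a.2

lemma ncard_inside (T : Finset (Fin n)) : (inside n T).ncard = T.card.choose 2 := by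
  classical
  have hinj : Function.Injective (Sym2.map (Subtype.val : T → Fin n)) :=
    (Function.Embedding.sym2Map ⟨Subtype.val, Subtype.val_injective⟩).injective
  rw [inside_eq_image, Set.ncard_image_of_injective _ hinj, ncard_notDiag, Fintype.card_coe]

lemma inside_subset (T : Finset (Fin n)) : inside n T ⊆ {s | ¬ s.IsDiag} := fun _ h => h.1

lemma meet_eq_diff (S : Finset (Fin n)) :
    meet n S = {s | ¬ s.IsDiag} \ inside n Sᶜ := by
  ext s
  simp only [meet, inside, Set.mem_setOf_eq, Set.mem_diff, Finset.mem_compl]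
  constructor
  · rintro ⟨hd, v, hv, hvS⟩
    exact ⟨hd, fun hc => hc.2 v hv hvS⟩
  · rintro ⟨hd, h⟩
    refine ⟨hd, ?_⟩
    by_contra hc
    push_neg at hc
    exact h ⟨hd, fun v hv => hc v hv⟩

lemma ncard_meet (S : Finset (Fin n)) :
    (meet n S).ncard = n.choose 2 - (Sᶜ.card).choose 2 := by
  rw [meet_eq_diff, Set.ncard_diff (inside_subset Sᶜ) (Set.toFinite _), ncard_inside,
    ncard_notDiag, Fintype.card_fin]

/-- Endpoints of a `Sym2` element as a `Finset`. -/
def toF (s : Sym2 (Fin n)) : Finset (Fin n) := Finset.univ.filter (· ∈ s)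

lemma mem_toF {v : Fin n} {s : Sym2 (Fin n)} : v ∈ toF s ↔ v ∈ s := by simp [toF]

lemma toF_mk (x y : Fin n) : toF s(x, y) = {x, y} := by
  ext v; simp [mem_toF, Sym2.mem_iff, Finset.mem_insert]

lemma card_toF {s : Sym2 (Fin n)} (h : ¬ s.IsDiag) : (toF s).card = 2 := by
  induction s using Sym2.ind with
  | _ x y =>
    rw [Sym2.mk_isDiag_iff] at h
    rw [toF_mk, Finset.card_pair h]

open Classical in
/-- The coloring: edges in `P` get distinct nonzero colors, others get `0`. -/
noncomputable def col (P : Set (Sym2 (Fin n))) (f : Sym2 (Fin n) → ℕ) : Sym2 (Fin n) → ℕ :=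
  fun s => if s ∈ P then f s + 1 else 0

lemma ncard_col_image {E P : Set (Sym2 (Fin n))} {f : Sym2 (Fin n) → ℕ}
    (hf : Injective f) (hPE : P ⊆ E) (hex : ∃ e ∈ E, e ∉ P) :
    ((col P f) '' E).ncard = P.ncard + 1 := by
  classical
  have himg : (col P f) '' E = insert 0 ((fun s => f s + 1) '' P) := by
    ext m
    constructor
    · rintro ⟨s, hs, rfl⟩
      by_cases h : s ∈ P
      · exact Set.mem_insert_iff.2 (Or.inr ⟨s, h, by simp [col, h]⟩)
      · simp [col, h]
    · rintro (rfl | ⟨s, hs, rfl⟩)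
      · obtain ⟨e, he, hep⟩ := hex
        exact ⟨e, he, by simp [col, hep]⟩
      · exact ⟨s, hPE hs, by simp [col, hs]⟩
  have h0 : (0 : ℕ) ∉ (fun s => f s + 1) '' P := by
    rintro ⟨s, _, h⟩; simp at h
  rw [himg, Set.ncard_insert_of_notMem h0 ((Set.toFinite _).image _),
    Set.ncard_image_of_injective _ (fun a b h => hf (by omega)), add_comm]

open Classical in
lemma card_zero_edges {M : Finset (Sym2 (Fin n))} {P : Set (Sym2 (Fin n))}
    {f : Sym2 (Fin n) → ℕ} (hinj : Set.InjOn (col P f) ↑M) :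
    (M.filter (fun e => e ∉ P)).card ≤ 1 := by
  refine Finset.card_le_one.2 fun a ha b hb => ?_
  rw [Finset.mem_filter] at ha hb
  refine hinj ha.1 hb.1 ?_
  simp [col, ha.2, hb.2]

/-- The graph where every edge has an endpoint in `T`. -/
def G1 (n : ℕ) (T : Finset (Fin n)) : SimpleGraph (Fin n) where
  Adj x y := x ≠ y ∧ (x ∈ T ∨ y ∈ T)
  symm := ⟨fun x y h => ⟨h.1.symm, h.2.symm⟩⟩
  loopless := ⟨fun x h => h.1 rfl⟩

lemma edgeSet_G1 (T : Finset (Fin n)) :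
    (G1 n T).edgeSet = {s | ¬ s.IsDiag} \ inside n Tᶜ := by
  ext s
  induction s using Sym2.ind with
  | _ x y =>
    simp only [SimpleGraph.mem_edgeSet, G1, Set.mem_diff, Set.mem_setOf_eq,
      Sym2.mk_isDiag_iff, inside, Sym2.mem_iff, Finset.mem_compl]
    constructor
    · rintro ⟨hxy, h⟩
      refine ⟨hxy, fun hc => ?_⟩
      rcases h with h | h
      · exact hc.2 x (Or.inl rfl) h
      · exact hc.2 y (Or.inr rfl) h
    · rintro ⟨hxy, h⟩
      refine ⟨hxy, ?_⟩
      by_contra hc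
      push_neg at hc
      exact h ⟨hxy, fun v hv => by rcases hv with rfl | rfl <;> tauto⟩

open Classical in
lemma aux_inside {T : Finset (Fin n)} {f : Sym2 (Fin n) → ℕ} {k : ℕ}
    {G : SimpleGraph (Fin n)}
    (h : HasRainbowMatching G (col (inside n T) f) k) : 2 * k ≤ T.card + 2 := by
  obtain ⟨M, hcard, hE, hdisj, hinj⟩ := h
  set P := inside n T with hP
  have h0 : (M.filter (fun e => e ∉ P)).card ≤ 1 := card_zero_edges hinj
  have hsplit := Finset.card_filter_add_card_filter_not (s := M)
    (p := fun e => e ∈ P)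
  set M' := M.filter (fun e => e ∈ P) with hM'
  have hdisj' : ∀ e ∈ M', ∀ g ∈ M', e ≠ g → Disjoint (toF e) (toF g) := by
    intro e he g hg hne
    rw [Finset.disjoint_left]
    intro v hv hv'
    exact hdisj e (Finset.mem_filter.1 he).1 g (Finset.mem_filter.1 hg).1 hne v
      (mem_toF.1 hv) (mem_toF.1 hv')
  have hsub : M'.biUnion toF ⊆ T := by
    intro v hv
    rw [Finset.mem_biUnion] at hv
    obtain ⟨e, he, hv⟩ := hv
    exact ((Finset.mem_filter.1 he).2).2 v (mem_toF.1 hv)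
  have hcardU : (M'.biUnion toF).card = 2 * M'.card := by
    rw [Finset.card_biUnion hdisj',
      Finset.sum_congr rfl (fun e he => card_toF ((Finset.mem_filter.1 he).2).1)]
    simp [mul_comm]
  have hle := Finset.card_le_card hsub
  omega

open Classical in
lemma aux_meet {S : Finset (Fin n)} {f : Sym2 (Fin n) → ℕ} {k : ℕ} (hn : 0 < n)
    {G : SimpleGraph (Fin n)}
    (h : HasRainbowMatching G (col (meet n S) f) k) : k ≤ S.card + 1 := by
  obtain ⟨M, hcard, hE, hdisj, hinj⟩ := h
  set P := meet n S with hP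
  have h0 : (M.filter (fun e => e ∉ P)).card ≤ 1 := card_zero_edges hinj
  have hsplit := Finset.card_filter_add_card_filter_not (s := M)
    (p := fun e => e ∈ P)
  set M' := M.filter (fun e => e ∈ P) with hM'
  by_contra hlt
  push_neg at hlt
  set g : Sym2 (Fin n) → Fin n :=
    fun e => if h : ∃ v ∈ e, v ∈ S then h.choose else ⟨0, hn⟩ with hg
  have hgmem : ∀ e ∈ M', g e ∈ e ∧ g e ∈ S := by
    intro e he
    have hex : ∃ v ∈ e, v ∈ S := ((Finset.mem_filter.1 he).2).2
    rw [hg]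
    simp only [dif_pos hex]
    exact ⟨hex.choose_spec.1, hex.choose_spec.2⟩
  have hmaps : ∀ e ∈ M', g e ∈ S := fun e he => (hgmem e he).2
  have hcardlt : S.card < M'.card := by omega
  obtain ⟨e, he, e', he', hne, heq⟩ :=
    Finset.exists_ne_map_eq_of_card_lt_of_maps_to hcardlt hmaps
  exact hdisj e (Finset.mem_filter.1 he).1 e' (Finset.mem_filter.1 he').1 hne (g e)
    (hgmem e he).1 (heq ▸ (hgmem e' he').1)

open Classical in
lemma aux_G1 {T : Finset (Fin n)} {f : Sym2 (Fin n) → ℕ} {k : ℕ}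
    (h : HasRainbowMatching (G1 n T) (col (inside n T) f) k) : 2 * k ≤ T.card + 1 := by
  obtain ⟨M, hcard, hE, hdisj, hinj⟩ := h
  set P := inside n T with hP
  have h0 : (M.filter (fun e => e ∉ P)).card ≤ 1 := card_zero_edges hinj
  have hsplit := Finset.card_filter_add_card_filter_not (s := M)
    (p := fun e => e ∈ P)
  set M' := M.filter (fun e => e ∈ P) with hM'
  have hdisj' : ∀ e ∈ M, ∀ g ∈ M, e ≠ g → Disjoint (toF e ∩ T) (toF g ∩ T) := by
    intro e he g hg hne
    rw [Finset.disjoint_left]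
    intro v hv hv'
    exact hdisj e he g hg hne v (mem_toF.1 (Finset.mem_inter.1 hv).1)
      (mem_toF.1 (Finset.mem_inter.1 hv').1)
  have hsub : M.biUnion (fun e => toF e ∩ T) ⊆ T := by
    intro v hv
    rw [Finset.mem_biUnion] at hv
    obtain ⟨e, he, hv⟩ := hv
    exact (Finset.mem_inter.1 hv).2
  have hone : ∀ e ∈ M, 1 ≤ (toF e ∩ T).card := by
    intro e he
    have := hE he
    rw [edgeSet_G1] at this
    obtain ⟨hd, hni⟩ := this
    have : ∃ v ∈ e, v ∈ T := by
      by_contra hc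
      push_neg at hc
      exact hni ⟨hd, fun v hv => Finset.mem_compl.2 (hc v hv)⟩
    obtain ⟨v, hv, hvT⟩ := this
    exact Finset.card_pos.2 ⟨v, Finset.mem_inter.2 ⟨mem_toF.2 hv, hvT⟩⟩
  have htwo : ∀ e ∈ M', (toF e ∩ T).card = 2 := by
    intro e he
    have hin : e ∈ P := (Finset.mem_filter.1 he).2
    have : toF e ∩ T = toF e := Finset.inter_eq_left.2 (fun v hv => hin.2 v (mem_toF.1 hv))
    rw [this, card_toF hin.1]
  have hcardU : (M.biUnion (fun e => toF e ∩ T)).card = ∑ e ∈ M, (toF e ∩ T).card :=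
    Finset.card_biUnion hdisj'
  have hsum : ∑ e ∈ M, (toF e ∩ T).card =
      ∑ e ∈ M', (toF e ∩ T).card + ∑ e ∈ M.filter (fun e => e ∉ P), (toF e ∩ T).card :=
    (Finset.sum_filter_add_sum_filter_not M (fun e => e ∈ P) _).symm
  have hsum1 : ∑ e ∈ M', (toF e ∩ T).card = 2 * M'.card := by
    rw [Finset.sum_congr rfl htwo]; simp [mul_comm]
  have hsum2 : (M.filter (fun e => e ∉ P)).card ≤
      ∑ e ∈ M.filter (fun e => e ∉ P), (toF e ∩ T).card := by
    calc (M.filter (fun e => e ∉ P)).card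
        = ∑ _e ∈ M.filter (fun e => e ∉ P), 1 := by simp
      _ ≤ _ := Finset.sum_le_sum (fun e he => hone e (Finset.mem_filter.1 he).1)
  have hle := Finset.card_le_card hsub
  omega

lemma choose_two_add (a b : ℕ) : (a + b).choose 2 = a.choose 2 + a * b + b.choose 2 := by
  induction b with
  | zero => simp
  | succ b ih =>
    have h1 : (a + b + 1).choose 2 = (a + b).choose 2 + (a + b) := by
      rw [Nat.choose_succ_succ, Nat.choose_one_right, add_comm]
    have h2 : (b + 1).choose 2 = b.choose 2 + b := by
      rw [Nat.choose_succ_succ, Nat.choose_one_right, add_comm]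
    have := Nat.choose_le_choose 2 (Nat.le_add_right a b)
    calc (a + (b + 1)).choose 2 = (a + b + 1).choose 2 := by ring_nf
      _ = a.choose 2 + a * b + b.choose 2 + (a + b) := by rw [h1, ih]
      _ = a.choose 2 + a * (b + 1) + (b + 1).choose 2 := by rw [h2]; ring

end RMAux

namespace RMAux

lemma cons1 {k n : ℕ} (hk : 2 ≤ k) (hn : 2 * k ≤ n) :
    ∃ (G : SimpleGraph (Fin n)) (c : Sym2 (Fin n) → ℕ),
      (G.edgeSet.ncard : ℤ) + ((c '' G.edgeSet).ncard : ℤ) =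
        (n.choose 2 : ℤ) + 1 +
          (((2 * k - 2).choose 2 : ℤ) - ((n - 2 * k + 2).choose 2 : ℤ)) ∧
      ¬ HasRainbowMatching G c k := by
  classical
  obtain ⟨f, hf⟩ := exists_injective_nat (Sym2 (Fin n))
  obtain ⟨T, -, hTcard⟩ := Finset.exists_subset_card_eq
    (show 2 * k - 2 ≤ (Finset.univ : Finset (Fin n)).card by
      simp [Finset.card_univ]; omega)
  have hcompl : Tᶜ.card = n - 2 * k + 2 := by
    rw [Finset.card_compl, hTcard, Fintype.card_fin]; omega
  refine ⟨G1 n T, col (inside n T) f, ?_, ?_⟩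
  · have hPE : inside n T ⊆ (G1 n T).edgeSet := by
      intro s hs
      rw [edgeSet_G1]
      refine ⟨hs.1, fun hc => ?_⟩
      induction s using Sym2.ind with
      | _ x y =>
        exact Finset.mem_compl.1 (hc.2 x (by simp)) (hs.2 x (by simp))
    have hex : ∃ e ∈ (G1 n T).edgeSet, e ∉ inside n T := by
      obtain ⟨a, haT⟩ := Finset.card_pos.1 (show 0 < T.card by omega)
      obtain ⟨b, hbT⟩ := Finset.card_pos.1 (show 0 < Tᶜ.card by omega)
      have hab : a ≠ b := fun h => Finset.mem_compl.1 hbT (h ▸ haT)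
      refine ⟨s(a, b), ?_, ?_⟩
      · rw [edgeSet_G1]
        refine ⟨by simpa using hab, fun hc => ?_⟩
        exact Finset.mem_compl.1 (hc.2 a (by simp)) haT
      · intro hc
        exact Finset.mem_compl.1 hbT (hc.2 b (by simp))
    have hE : (G1 n T).edgeSet.ncard = n.choose 2 - (n - 2 * k + 2).choose 2 := by
      rw [edgeSet_G1, Set.ncard_diff (inside_subset Tᶜ) (Set.toFinite _),
        ncard_inside, ncard_notDiag, Fintype.card_fin, hcompl]
    have hC : ((col (inside n T) f) '' (G1 n T).edgeSet).ncard = (2 * k - 2).choose 2 + 1 := by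
      rw [ncard_col_image hf hPE hex, ncard_inside, hTcard]
    rw [hE, hC]
    have hle : (n - 2 * k + 2).choose 2 ≤ n.choose 2 := Nat.choose_le_choose 2 (by omega)
    push_cast [Nat.cast_sub hle]
    ring
  · intro h
    have := aux_G1 h
    omega

lemma cons2 {k n : ℕ} (hk : 2 ≤ k) (hn : 2 * k ≤ n) :
    ∃ (G : SimpleGraph (Fin n)) (c : Sym2 (Fin n) → ℕ),
      (G.edgeSet.ncard : ℤ) + ((c '' G.edgeSet).ncard : ℤ) =
        (n.choose 2 : ℤ) + 1 +
          ((((k - 2).choose 2 + (k - 2) * (n - k + 2) : ℕ)) : ℤ) ∧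
      ¬ HasRainbowMatching G c k := by
  classical
  obtain ⟨f, hf⟩ := exists_injective_nat (Sym2 (Fin n))
  obtain ⟨S, -, hScard⟩ := Finset.exists_subset_card_eq
    (show k - 2 ≤ (Finset.univ : Finset (Fin n)).card by
      simp [Finset.card_univ]; omega)
  have hcompl : Sᶜ.card = n - k + 2 := by
    rw [Finset.card_compl, hScard, Fintype.card_fin]; omega
  have hEtop : (⊤ : SimpleGraph (Fin n)).edgeSet = {s : Sym2 (Fin n) | ¬ s.IsDiag} :=
    SimpleGraph.edgeSet_top
  refine ⟨⊤, col (meet n S) f, ?_, ?_⟩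
  · have hPE : meet n S ⊆ (⊤ : SimpleGraph (Fin n)).edgeSet := by
      rw [hEtop]; exact fun s hs => hs.1
    have hex : ∃ e ∈ (⊤ : SimpleGraph (Fin n)).edgeSet, e ∉ meet n S := by
      obtain ⟨a, haS, b, hbS, hab⟩ := Finset.one_lt_card.1
        (show 1 < Sᶜ.card by omega)
      refine ⟨s(a, b), by rw [hEtop]; simpa using hab, ?_⟩
      rintro ⟨-, v, hv, hvS⟩
      rw [Sym2.mem_iff] at hv
      rcases hv with rfl | rfl
      · exact Finset.mem_compl.1 haS hvS
      · exact Finset.mem_compl.1 hbS hvS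
    have hE : (⊤ : SimpleGraph (Fin n)).edgeSet.ncard = n.choose 2 := by
      rw [hEtop, ncard_notDiag, Fintype.card_fin]
    have key : n.choose 2 = (k - 2).choose 2 + (k - 2) * (n - k + 2) + (n - k + 2).choose 2 := by
      have := choose_two_add (k - 2) (n - k + 2)
      rwa [show k - 2 + (n - k + 2) = n by omega] at this
    have hC : ((col (meet n S) f) '' (⊤ : SimpleGraph (Fin n)).edgeSet).ncard =
        ((k - 2).choose 2 + (k - 2) * (n - k + 2)) + 1 := by
      rw [ncard_col_image hf hPE hex, ncard_meet, hcompl]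
      omega
    rw [hE, hC]
    push_cast
    ring
  · intro h
    have := aux_meet (show 0 < n by omega) h
    omega

lemma cons3 {k n : ℕ} (hk : 2 ≤ k) (hn : 2 * k ≤ n) :
    ∃ (G : SimpleGraph (Fin n)) (c : Sym2 (Fin n) → ℕ),
      (G.edgeSet.ncard : ℤ) + ((c '' G.edgeSet).ncard : ℤ) =
        (n.choose 2 : ℤ) + 1 + (((2 * k - 3).choose 2 : ℕ) : ℤ) ∧
      ¬ HasRainbowMatching G c k := by
  classical
  obtain ⟨f, hf⟩ := exists_injective_nat (Sym2 (Fin n))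
  obtain ⟨T, -, hTcard⟩ := Finset.exists_subset_card_eq
    (show 2 * k - 3 ≤ (Finset.univ : Finset (Fin n)).card by
      simp [Finset.card_univ]; omega)
  have hcompl : Tᶜ.card = n - 2 * k + 3 := by
    rw [Finset.card_compl, hTcard, Fintype.card_fin]; omega
  have hEtop : (⊤ : SimpleGraph (Fin n)).edgeSet = {s : Sym2 (Fin n) | ¬ s.IsDiag} :=
    SimpleGraph.edgeSet_top
  refine ⟨⊤, col (inside n T) f, ?_, ?_⟩
  · have hPE : inside n T ⊆ (⊤ : SimpleGraph (Fin n)).edgeSet := by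
      rw [hEtop]; exact fun s hs => hs.1
    have hex : ∃ e ∈ (⊤ : SimpleGraph (Fin n)).edgeSet, e ∉ inside n T := by
      obtain ⟨a, haT, b, hbT, hab⟩ := Finset.one_lt_card.1
        (show 1 < Tᶜ.card by omega)
      refine ⟨s(a, b), by rw [hEtop]; simpa using hab, ?_⟩
      intro hc
      exact Finset.mem_compl.1 haT (hc.2 a (by simp))
    have hE : (⊤ : SimpleGraph (Fin n)).edgeSet.ncard = n.choose 2 := by
      rw [hEtop, ncard_notDiag, Fintype.card_fin]
    have hC : ((col (inside n T) f) '' (⊤ : SimpleGraph (Fin n)).edgeSet).ncard =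
        (2 * k - 3).choose 2 + 1 := by
      rw [ncard_col_image hf hPE hex, ncard_inside, hTcard]
    rw [hE, hC]
    push_cast
    ring
  · intro h
    have := aux_inside h
    omega

end RMAux


/-- Sharpness: for all `k ≥ 2` and `n ≥ 2k` there is an edge-colored graph `G` on `n`
vertices with `e(G) + c(G) = C(n,2) + 1 + max{C(2k-2,2) - C(n-2k+2,2),
C(k-2,2) + (k-2)(n-k+2), C(2k-3,2)}` (subtraction in `ℤ`) and no rainbow matching of size
`k`; hence the threshold `C(n,2) + 2 + max{...}` is best possible. -/
theorem threshold_sharp (k n : ℕ) (hk : 2 ≤ k) (hn : 2 * k ≤ n) :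
    ∃ (G : SimpleGraph (Fin n)) (c : Sym2 (Fin n) → ℕ),
      (G.edgeSet.ncard : ℤ) + ((c '' G.edgeSet).ncard : ℤ) =
        (n.choose 2 : ℤ) + 1 +
          max (((2 * k - 2).choose 2 : ℤ) - ((n - 2 * k + 2).choose 2 : ℤ))
            (max ((((k - 2).choose 2 + (k - 2) * (n - k + 2) : ℕ)) : ℤ)
              (((2 * k - 3).choose 2 : ℕ) : ℤ)) ∧
      ¬ HasRainbowMatching G c k := by
  rcases le_total (((2 * k - 2).choose 2 : ℤ) - ((n - 2 * k + 2).choose 2 : ℤ))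
      (max ((((k - 2).choose 2 + (k - 2) * (n - k + 2) : ℕ)) : ℤ)
        (((2 * k - 3).choose 2 : ℕ) : ℤ)) with h | h
  · rw [max_eq_right h]
    rcases le_total ((((k - 2).choose 2 + (k - 2) * (n - k + 2) : ℕ)) : ℤ)
        (((2 * k - 3).choose 2 : ℕ) : ℤ) with h' | h'
    · rw [max_eq_right h']
      exact RMAux.cons3 hk hn
    · rw [max_eq_left h']
      exact RMAux.cons2 hk hn
  · rw [max_eq_left h]
    exact RMAux.cons1 hk hn
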